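/- For every vector x ≥ 0 satisfying the state-action frequency constraints (initial condition, flow conservation, and terminal condition), there exists a unique regular policy π^x such that x = x_{π^x}. Hence π ↦ x_π is a bijection from regular policies onto the polytope P of state-action frequency vectors. -/

import Mathlib

open Finset

/-- A finite-horizon MDP with `N` states, horizon `T` (epochs `0,…,T-1`, so `T ≥ 2` has at
least one decision epoch), action sets `Fin (k s)` for each state `s`, and transition
probabilities `p t s a j = p_t(j | s, a)` governing the move from epoch `t` to `t+1`,
together with a strictly positive initial distribution `α`. -/
structure MDP (N T : ℕ) (k : Fin N → ℕ) : Type where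
  p : ℕ → (s : Fin N) → Fin (k s) → Fin N → ℝ
  α : Fin N → ℝ
  p_nonneg : ∀ t s a j, 0 ≤ p t s a j
  p_sum : ∀ t s a, ∑ j, p t s a j = 1
  α_pos : ∀ s, 0 < α s
  α_sum : ∑ s, α s = 1

/-- A (randomized, Markov, non-stationary) policy: `q t s a` is the probability that
action `a` is chosen in state `s` at decision epoch `t`. -/
structure Policy (N : ℕ) (k : Fin N → ℕ) : Type where
  q : ℕ → (s : Fin N) → Fin (k s) → ℝ
  q_nonneg : ∀ t s a, 0 ≤ q t s a
  q_sum : ∀ t s, ∑ a, q t s a = 1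

variable {N T : ℕ} {k : Fin N → ℕ}

/-- `condProb M π j t s` is `P^π(S_t = s | S_0 = j)` (epochs indexed from 0). -/
def condProb (M : MDP N T k) (π : Policy N k) (j : Fin N) : ℕ → Fin N → ℝ
  | 0, s => if s = j then 1 else 0
  | t+1, s => ∑ s', ∑ a, condProb M π j t s' * π.q t s' a * M.p t s' a s

/-- The state-action frequency `x_{π,t}(s,a) = ∑_j α(j) P^π(S_t = s, A_t = a | S_0 = j)`
(epochs indexed from 0, so the decision epochs are `0,…,T-2`). -/
def xsa (M : MDP N T k) (π : Policy N k) (t : ℕ) (s : Fin N) (a : Fin (k s)) : ℝ :=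
  ∑ j, M.α j * condProb M π j t s * π.q t s a

/-- The terminal state frequency `x_{π,T}(s)` (terminal epoch is `T-1` in 0-based indexing). -/
def xT (M : MDP N T k) (π : Policy N k) (s : Fin N) : ℝ :=
  ∑ j, M.α j * condProb M π j (T-1) s

/-- A policy is regular if at every decision epoch `t ≤ T-2` and at every state `s`
unreachable at `t`, it puts full mass on the first action. -/
def RegularPol (M : MDP N T k) (hk : ∀ s, 1 ≤ k s) (π : Policy N k) : Prop :=
  ∀ t s, t + 2 ≤ T → (∀ j, condProb M π j t s = 0) → π.q t s ⟨0, hk s⟩ = 1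

lemma condProb_nonneg (M : MDP N T k) (π : Policy N k) (j : Fin N) :
    ∀ t s, 0 ≤ condProb M π j t s := by
  intro t
  induction t with
  | zero => intro s; simp only [condProb]; split <;> norm_num
  | succ t ih =>
    intro s
    refine Finset.sum_nonneg fun s' _ => Finset.sum_nonneg fun a _ => ?_
    exact mul_nonneg (mul_nonneg (ih s') (π.q_nonneg t s' a)) (M.p_nonneg t s' a s)

lemma W_zero (M : MDP N T k) (π : Policy N k) (s : Fin N) :
    ∑ j, M.α j * condProb M π j 0 s = M.α s := by
  simp [condProb, mul_ite]

lemma W_step (M : MDP N T k) (π : Policy N k) (t : ℕ) (s : Fin N) :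
    ∑ j, M.α j * condProb M π j (t+1) s
      = ∑ s', ∑ a, (∑ j, M.α j * condProb M π j t s') * π.q t s' a * M.p t s' a s := by
  simp only [condProb, Finset.mul_sum, Finset.sum_mul]
  rw [Finset.sum_comm]
  refine Finset.sum_congr rfl fun s' _ => ?_
  rw [Finset.sum_comm]
  exact Finset.sum_congr rfl fun a _ => Finset.sum_congr rfl fun j _ => by ring

lemma marginal_eq (M : MDP N T k) (π : Policy N k)
    (y : ℕ → (s : Fin N) → Fin (k s) → ℝ)
    (ha : ∀ j, ∑ a, y 0 j a = M.α j)
    (hb : ∀ t j, t + 3 ≤ T → ∑ a, y (t+1) j a = ∑ s, ∑ a, M.p t s a j * y t s a)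
    (hq : ∀ t s a, t + 2 ≤ T →
      (∑ j, M.α j * condProb M π j t s) = (∑ b, y t s b) →
      (∑ j, M.α j * condProb M π j t s) * π.q t s a = y t s a) :
    ∀ t, t + 2 ≤ T → ∀ s, ∑ j, M.α j * condProb M π j t s = ∑ a, y t s a := by
  intro t
  induction t with
  | zero => intro _ s; rw [W_zero, ha]
  | succ t ih =>
    intro ht s
    have ht' : t + 2 ≤ T := by omega
    rw [W_step, hb t s (by omega)]
    refine Finset.sum_congr rfl fun s' _ => Finset.sum_congr rfl fun a _ => ?_
    rw [← hq t s' a ht' (ih ht' s')]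
    ring

lemma q_forced_zero (hk : ∀ s, 1 ≤ k s) (π : Policy N k) (t : ℕ) (s : Fin N)
    (h1 : π.q t s ⟨0, hk s⟩ = 1) (a : Fin (k s)) (hna : a ≠ ⟨0, hk s⟩) :
    π.q t s a = 0 := by
  have h := π.q_sum t s
  rw [← Finset.add_sum_erase _ _ (Finset.mem_univ (⟨0, hk s⟩ : Fin (k s))), h1] at h
  have h0 : ∑ b ∈ Finset.univ.erase (⟨0, hk s⟩ : Fin (k s)), π.q t s b = 0 := by linarith
  exact (Finset.sum_eq_zero_iff_of_nonneg (fun b _ => π.q_nonneg t s b)).mp h0 a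
    (Finset.mem_erase.mpr ⟨hna, Finset.mem_univ a⟩)

noncomputable def mkPol (hk : ∀ s, 1 ≤ k s)
    (y : ℕ → (s : Fin N) → Fin (k s) → ℝ)
    (hy : ∀ t s a, t + 2 ≤ T → 0 ≤ y t s a) : Policy N k where
  q t s a := if t + 2 ≤ T ∧ 0 < ∑ b, y t s b then y t s a / ∑ b, y t s b
             else if a = ⟨0, hk s⟩ then 1 else 0
  q_nonneg := by
    intro t s a; split
    · next h => exact div_nonneg (hy t s a h.1) h.2.le
    · split <;> norm_num
  q_sum := by
    intro t s
    by_cases h : t + 2 ≤ T ∧ 0 < ∑ b, y t s b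
    · simp only [if_pos h]
      rw [← Finset.sum_div, div_self (ne_of_gt h.2)]
    · simp only [if_neg h]
      simp [Finset.sum_ite_eq']

lemma mkPol_spec (hk : ∀ s, 1 ≤ k s)
    (y : ℕ → (s : Fin N) → Fin (k s) → ℝ)
    (hy : ∀ t s a, t + 2 ≤ T → 0 ≤ y t s a)
    (t : ℕ) (s : Fin N) (a : Fin (k s)) (ht : t + 2 ≤ T) :
    (∑ b, y t s b) * (mkPol hk y hy).q t s a = y t s a := by
  by_cases h : 0 < ∑ b, y t s b
  · simp only [mkPol, if_pos (And.intro ht h)]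
    field_simp
  · have hz : ∑ b, y t s b = 0 :=
      le_antisymm (not_lt.mp h) (Finset.sum_nonneg fun b _ => hy t s b ht)
    have hya : y t s a = 0 :=
      (Finset.sum_eq_zero_iff_of_nonneg (fun b _ => hy t s b ht)).mp hz a (Finset.mem_univ a)
    rw [hz, hya, zero_mul]

/-- every nonnegative solution `(y, yT)` of the state-action frequency
constraints (a)-(c) is realized by a regular policy `π` (i.e. `y = x_π`, `yT = x_{π,T}`),
and this regular policy is unique (its decision rules at all decision epochs are
uniquely determined).  Hence `π ↦ x_π` is a bijection from regular policies onto the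
polytope of state-action frequency vectors. -/
theorem frequency_polytope_realized_by_unique_regular_policy
    (N T : ℕ) (k : Fin N → ℕ) (hk : ∀ s, 1 ≤ k s) (hT : 2 ≤ T) (M : MDP N T k)
    (y : ℕ → (s : Fin N) → Fin (k s) → ℝ) (yT : Fin N → ℝ)
    (hy_nonneg : ∀ t s a, t + 2 ≤ T → 0 ≤ y t s a) (hyT_nonneg : ∀ s, 0 ≤ yT s)
    (ha : ∀ j, ∑ a, y 0 j a = M.α j)
    (hb : ∀ t j, t + 3 ≤ T → ∑ a, y (t+1) j a = ∑ s, ∑ a, M.p t s a j * y t s a)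
    (hc : ∀ j, yT j = ∑ s, ∑ a, M.p (T-2) s a j * y (T-2) s a) :
    (∃ π : Policy N k, RegularPol M hk π ∧
        (∀ t s a, t + 2 ≤ T → xsa M π t s a = y t s a) ∧ (∀ s, xT M π s = yT s)) ∧
      (∀ π π' : Policy N k, RegularPol M hk π → RegularPol M hk π' →
        (∀ t s a, t + 2 ≤ T → xsa M π t s a = y t s a) →
        (∀ t s a, t + 2 ≤ T → xsa M π' t s a = y t s a) →
        ∀ t s a, t + 2 ≤ T → π.q t s a = π'.q t s a) := by
  classical
  constructor
  · -- existence
    set π := mkPol hk y hy_nonneg with hπdef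
    have hq : ∀ t s a, t + 2 ≤ T →
        (∑ j, M.α j * condProb M π j t s) = (∑ b, y t s b) →
        (∑ j, M.α j * condProb M π j t s) * π.q t s a = y t s a := by
      intro t s a ht hW
      rw [hW]; exact mkPol_spec hk y hy_nonneg t s a ht
    have hm := marginal_eq M π y ha hb hq
    refine ⟨π, ?_, ?_, ?_⟩
    · intro t s ht h0
      have hW : ∑ j, M.α j * condProb M π j t s = 0 := by simp [h0]
      have hz : ∑ b, y t s b = 0 := by rw [← hm t ht s, hW]
      show (mkPol hk y hy_nonneg).q t s ⟨0, hk s⟩ = 1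
      simp only [mkPol]
      rw [if_neg (by rw [hz]; rintro ⟨-, hcon⟩; exact lt_irrefl 0 hcon)]
      simp
    · intro t s a ht
      simp only [xsa]
      rw [← Finset.sum_mul, hm t ht s]
      exact mkPol_spec hk y hy_nonneg t s a ht
    · intro s
      simp only [xT]
      have hT2 : T - 1 = (T - 2) + 1 := by omega
      rw [hT2, W_step, hc s]
      refine Finset.sum_congr rfl fun s' _ => Finset.sum_congr rfl fun a _ => ?_
      rw [hm (T-2) (by omega) s', mkPol_spec hk y hy_nonneg (T-2) s' a (by omega),
        mul_comm]
  · -- uniqueness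
    intro π π' hreg hreg' hx hx'
    have key : ∀ ρ : Policy N k, RegularPol M hk ρ →
        (∀ t s a, t + 2 ≤ T → xsa M ρ t s a = y t s a) →
        ∀ t s a, t + 2 ≤ T → ρ.q t s a =
          if 0 < ∑ b, y t s b then y t s a / ∑ b, y t s b
          else if a = ⟨0, hk s⟩ then 1 else 0 := by
      intro ρ hregρ hxρ t s a ht
      have hq : ∀ t s a, t + 2 ≤ T →
          (∑ j, M.α j * condProb M ρ j t s) = (∑ b, y t s b) →
          (∑ j, M.α j * condProb M ρ j t s) * ρ.q t s a = y t s a := by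
        intro t s a ht _
        rw [← hxρ t s a ht]
        simp only [xsa]
        exact Finset.sum_mul _ _ _
      have hm := marginal_eq M ρ y ha hb hq
      by_cases h : 0 < ∑ b, y t s b
      · rw [if_pos h]
        have h1 : (∑ b, y t s b) * ρ.q t s a = y t s a := by
          conv_lhs => rw [← hm t ht s]
          exact hq t s a ht (hm t ht s)
        rw [eq_div_iff (ne_of_gt h), mul_comm]
        exact h1
      · rw [if_neg h]
        have hz : ∑ b, y t s b = 0 :=
          le_antisymm (not_lt.mp h) (Finset.sum_nonneg fun b _ => hy_nonneg t s b ht)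
        have hW : ∑ j, M.α j * condProb M ρ j t s = 0 := by rw [hm t ht s, hz]
        have h0 : ∀ j, condProb M ρ j t s = 0 := by
          intro j
          have h2 := (Finset.sum_eq_zero_iff_of_nonneg
            (fun j _ => mul_nonneg (M.α_pos j).le (condProb_nonneg M ρ j t s))).mp hW j
            (Finset.mem_univ j)
          exact (mul_eq_zero.mp h2).resolve_left (ne_of_gt (M.α_pos j))
        have h1 := hregρ t s ht h0
        by_cases hha : a = ⟨0, hk s⟩
        · subst hha; rw [if_pos rfl]; exact h1
        · rw [if_neg hha]; exact q_forced_zero hk ρ t s h1 a hha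
    intro t s a ht
    rw [key π hreg hx t s a ht, key π' hreg' hx' t s a ht]
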